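/- Under the stated hypotheses, the elements M_D(i, 0), M_D(i, 1), …, M_D(i, λ₀−1) are pairwise distinct for every natural number i. -/

import Mathlib

/-- The ordered product `D_j · D_{j+τ} ⋯ D_{j+(k-1)τ}`. -/
def chainProd {G : Type*} [Group G] (D : ℕ → G) (τ j k : ℕ) : G :=
  ((List.range k).map fun i => D (j + i * τ)).prod

lemma chainProd_split {G : Type*} [Group G] (D : ℕ → G) (τ j a b : ℕ) :
    chainProd D τ j (a + b) = chainProd D τ j a * chainProd D τ (j + a * τ) b := by
  unfold chainProd
  rw [List.range_add, List.map_append, List.prod_append, List.map_map]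
  have : ((fun i => D (j + i * τ)) ∘ fun x => a + x) = fun i => D (j + a * τ + i * τ) := by
    funext i; simp only [Function.comp]; congr 1; ring
  rw [this]

lemma phi_chainProd {G : Type*} [Group G] (φ : G →* G) (D : ℕ → G)
    (hD : ∀ j, φ (D j) = D (j + 1)) (τ j k : ℕ) :
    φ (chainProd D τ j k) = chainProd D τ (j + 1) k := by
  unfold chainProd
  rw [map_list_prod, List.map_map]
  congr 1
  congr 1
  ext i
  simp [Function.comp, hD]
  congr 1
  ring

lemma phi_iter_chainProd {G : Type*} [Group G] (φ : G →* G) (D : ℕ → G)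
    (hD : ∀ j, φ (D j) = D (j + 1)) (τ k : ℕ) :
    ∀ n j, (⇑φ)^[n] (chainProd D τ j k) = chainProd D τ (j + n) k := by
  intro n
  induction n with
  | zero => intro j; simp
  | succ n ih =>
    intro j
    rw [Function.iterate_succ_apply, phi_chainProd φ D hD, ih]
    ring_nf

theorem stmt_8 {G : Type*} [Group G] (φ : G →* G) (hφ : Function.Injective φ)
    (D : ℕ → G) (hD : ∀ j, φ (D j) = D (j + 1)) (τ : ℕ) (hτ : 0 < τ)
    (lam0 : ℕ) (hl0 : 0 < lam0) (hl1 : chainProd D τ 0 lam0 = 1)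
    (hleast : ∀ m : ℕ, 0 < m → chainProd D τ 0 m = 1 → lam0 ≤ m) :
    ∀ i : ℕ, ∀ k₁ < lam0, ∀ k₂ < lam0,
      chainProd D τ i k₁ = chainProd D τ i k₂ → k₁ = k₂ := by
  -- key claim: if k₁ < k₂ then products differ
  have key : ∀ i : ℕ, ∀ k₁ k₂ : ℕ, k₁ < k₂ → k₂ < lam0 →
      chainProd D τ i k₁ = chainProd D τ i k₂ → False := by
    intro i k₁ k₂ hlt hk₂ heq
    obtain ⟨m, hm⟩ : ∃ m, k₂ = k₁ + m := ⟨k₂ - k₁, by omega⟩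
    subst hm
    rw [chainProd_split] at heq
    have h1 : chainProd D τ (i + k₁ * τ) m = 1 := by
      have := mul_left_cancel (a := chainProd D τ i k₁)
        (b := 1) (c := chainProd D τ (i + k₁ * τ) m) (by rw [mul_one]; exact heq)
      exact this.symm
    have h2 : (⇑φ)^[i + k₁ * τ] (chainProd D τ 0 m) = 1 := by
      rw [phi_iter_chainProd φ D hD]
      simpa using h1
    have h3 : chainProd D τ 0 m = 1 := by
      have hinj : Function.Injective ((⇑φ)^[i + k₁ * τ]) := hφ.iterate _
      apply hinj
      rw [h2]
      simp
    have := hleast m (by omega) h3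
    omega
  intro i k₁ hk₁ k₂ hk₂ heq
  rcases lt_trichotomy k₁ k₂ with h | h | h
  · exact absurd heq (fun e => key i k₁ k₂ h hk₂ e)
  · exact h
  · exact absurd heq.symm (fun e => key i k₂ k₁ h hk₁ e)
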